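/- Let a be an integer with a ≡ 3 (mod 4). Then the function n ↦ (κ_a(n) : ℂ) is a mock character of mockulus 2: it is completely multiplicative, 2-automatic (its 2-kernel is finite), not eventually periodic, κ_a(0) = 0, and there exists an integer d ≥ 1 such that for all n ≥ 1, κ_a(n) = 0 if and only if gcd(n, d) ≠ 1. -/

import Mathlib

/-- `f : ℕ → ℂ` is completely multiplicative. -/
def CompletelyMultiplicativeFun (f : ℕ → ℂ) : Prop :=
  f 1 = 1 ∧ ∀ m n : ℕ, f (m * n) = f m * f n

/-- `f : ℕ → ℂ` is `q`-automatic: its `q`-kernel is finite. -/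
def IsAutomatic (q : ℕ) (f : ℕ → ℂ) : Prop :=
  Set.Finite {g : ℕ → ℂ | ∃ k s : ℕ, s < q ^ k ∧ g = fun m => f (q ^ k * m + s)}

/-- `f : ℕ → ℂ` is eventually periodic. -/
def EventuallyPeriodicFun (f : ℕ → ℂ) : Prop :=
  ∃ N T : ℕ, 1 ≤ T ∧ ∀ n ≥ N, f (n + T) = f n

/-- `f : ℕ → ℂ` is a mock character of mockulus `q`. -/
def IsMockCharacter (q : ℕ) (f : ℕ → ℂ) : Prop :=
  CompletelyMultiplicativeFun f ∧ f 0 = 0 ∧ IsAutomatic q f ∧ ¬ EventuallyPeriodicFun f ∧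
    ∃ d : ℕ, 1 ≤ d ∧ ∀ n : ℕ, 1 ≤ n → (f n = 0 ↔ Nat.gcd n d ≠ 1)

/-- The Kronecker symbol `κ_a(n) = (a | n)` for `n : ℕ`. -/
def kron (a : ℤ) (n : ℕ) : ℤ :=
  if n = 0 then 0
  else (ZMod.χ₈ (a : ZMod 8)) ^ (padicValNat 2 n) * jacobiSym a (n / 2 ^ padicValNat 2 n)

namespace KronAux

lemma kron_zero (a : ℤ) : kron a 0 = 0 := by simp [kron]

lemma kron_one (a : ℤ) : kron a 1 = 1 := by
  simp [kron, jacobiSym.one_right]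

lemma kron_two (a : ℤ) : kron a 2 = ZMod.χ₈ (a : ZMod 8) := by
  have h : padicValNat 2 2 = 1 := padicValNat.self (by norm_num)
  simp [kron, h, jacobiSym.one_right]

lemma kron_odd {a : ℤ} {n : ℕ} (hn : n % 2 = 1) : kron a n = jacobiSym a n := by
  have h0 : n ≠ 0 := by omega
  have h : padicValNat 2 n = 0 := padicValNat.eq_zero_of_not_dvd (by omega)
  simp [kron, h0, h]

lemma kron_mul (a : ℤ) (m n : ℕ) : kron a (m * n) = kron a m * kron a n := by
  rcases eq_or_ne m 0 with rfl | hm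
  · simp [kron]
  rcases eq_or_ne n 0 with rfl | hn
  · simp [kron]
  have hmn : m * n ≠ 0 := mul_ne_zero hm hn
  unfold kron
  rw [if_neg hm, if_neg hn, if_neg hmn]
  haveI : Fact (Nat.Prime 2) := ⟨Nat.prime_two⟩
  rw [padicValNat.mul hm hn]
  have h1 : 2 ^ padicValNat 2 m ∣ m := pow_padicValNat_dvd
  have h2 : 2 ^ padicValNat 2 n ∣ n := pow_padicValNat_dvd
  have hq1 : m / 2 ^ padicValNat 2 m ≠ 0 :=
    (Nat.div_pos (Nat.le_of_dvd (Nat.pos_of_ne_zero hm) h1) (Nat.pow_pos two_pos)).ne'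
  have hq2 : n / 2 ^ padicValNat 2 n ≠ 0 :=
    (Nat.div_pos (Nat.le_of_dvd (Nat.pos_of_ne_zero hn) h2) (Nat.pow_pos two_pos)).ne'
  have hd : m * n / 2 ^ (padicValNat 2 m + padicValNat 2 n)
      = m / 2 ^ padicValNat 2 m * (n / 2 ^ padicValNat 2 n) := by
    rw [pow_add]
    exact (Nat.div_mul_div_comm h1 h2).symm
  rw [hd, jacobiSym.mul_right' a hq1 hq2, pow_add]
  ring

lemma kron_pow2_mul (a : ℤ) (k m : ℕ) :
    kron a (2 ^ k * m) = (ZMod.χ₈ (a : ZMod 8)) ^ k * kron a m := by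
  induction k with
  | zero => simp
  | succ k ih =>
      have h : 2 ^ (k + 1) * m = 2 * (2 ^ k * m) := by ring
      rw [h, kron_mul, kron_two, ih, pow_succ]
      ring

lemma chi8_cases {a : ℤ} (h4 : a % 4 = 3) :
    ZMod.χ₈ (a : ZMod 8) = 1 ∨ ZMod.χ₈ (a : ZMod 8) = -1 := by
  rw [ZMod.χ₈_int_eq_if_mod_eight]
  have h2 : ¬ a % 2 = 0 := by omega
  rcases (by omega : a % 8 = 3 ∨ a % 8 = 7) with h8 | h8 <;> simp [h2, h8]

/-- Key computation: `J(a | 2|a|+1) = -1` when `a ≡ 3 mod 4`. -/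
lemma jacobi_key {a : ℤ} (h4 : a % 4 = 3) : jacobiSym a (2 * a.natAbs + 1) = -1 := by
  set b := 2 * a.natAbs + 1 with hb
  have hb2 : b % 2 = 1 := by omega
  rcases lt_or_ge 0 a with hpos | hneg
  · -- a > 0
    have ha' : a = (a.natAbs : ℤ) := by omega
    have hA4 : a.natAbs % 4 = 3 := by omega
    have hb4 : b % 4 = 3 := by omega
    rw [ha', jacobiSym.quadratic_reciprocity_three_mod_four hA4 hb4, jacobiSym.mod_left]
    have h3 : (3 : ℤ) ≤ (a.natAbs : ℤ) := by omega
    have hbe : ((b : ℕ) : ℤ) = 1 + (a.natAbs : ℤ) * 2 := by rw [hb]; push_cast; ring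
    rw [hbe, Int.add_mul_emod_self_left,
      Int.emod_eq_of_lt (by norm_num) (by omega), jacobiSym.one_left]
  · -- a < 0
    have ha0 : a ≠ 0 := by omega
    have hA1 : a.natAbs % 4 = 1 := by omega
    have hb4 : b % 4 = 3 := by omega
    have hbodd : Odd b := Nat.odd_iff.mpr hb2
    have hneg1 : a = -1 * (a.natAbs : ℤ) := by omega
    rw [hneg1, jacobiSym.mul_left, jacobiSym.at_neg_one hbodd,
      ZMod.χ₄_nat_three_mod_four hb4]
    have hJA : jacobiSym ((a.natAbs : ℕ) : ℤ) b = 1 := by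
      rw [jacobiSym.quadratic_reciprocity_one_mod_four hA1 hbodd, jacobiSym.mod_left]
      rcases eq_or_lt_of_le (by omega : 1 ≤ a.natAbs) with h1 | h1
      · rw [← h1]
        exact jacobiSym.one_right _
      · have h3 : (1 : ℤ) < (a.natAbs : ℤ) := by omega
        have hbe : ((b : ℕ) : ℤ) = 1 + (a.natAbs : ℤ) * 2 := by rw [hb]; push_cast; ring
        rw [hbe, Int.add_mul_emod_self_left,
          Int.emod_eq_of_lt (by norm_num) (by omega), jacobiSym.one_left]
    rw [hJA]
    ring

end KronAux

open KronAux in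
theorem kron_is_mock_character_of_three_mod_four (a : ℤ) (h : a ≡ 3 [ZMOD 4]) :
    IsMockCharacter 2 (fun n => (kron a n : ℂ)) := by
  have h4 : a % 4 = 3 := by
    have h' : a % 4 = 3 % 4 := h
    omega
  have ha0 : a ≠ 0 := by omega
  have ha2 : a % 2 = 1 := by omega
  have hA1 : 1 ≤ a.natAbs := by omega
  have hAodd : a.natAbs % 2 = 1 := by omega
  have hecases := chi8_cases h4
  have hene : ZMod.χ₈ (a : ZMod 8) ≠ 0 := by
    rcases hecases with h' | h' <;> rw [h'] <;> norm_num
  have hpowcases : ∀ k : ℕ, ZMod.χ₈ (a : ZMod 8) ^ k = 1 ∨ ZMod.χ₈ (a : ZMod 8) ^ k = -1 := by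
    intro k
    rcases hecases with h' | h'
    · left; rw [h']; exact one_pow k
    · rw [h']; exact neg_one_pow_eq_or ℤ k
  have hmodM : ∀ n : ℕ, n % 2 = 1 → kron a n = jacobiSym a (n % (4 * a.natAbs)) := by
    intro n hn
    rw [kron_odd hn, jacobiSym.mod_right a (Nat.odd_iff.mpr hn)]
  refine ⟨⟨?_, ?_⟩, ?_, ?_, ?_, ?_⟩
  · show ((kron a 1 : ℤ) : ℂ) = 1
    rw [kron_one]; norm_num
  · intro m n
    show ((kron a (m * n) : ℤ) : ℂ) = ((kron a m : ℤ) : ℂ) * ((kron a n : ℤ) : ℂ)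
    rw [kron_mul a m n]; push_cast; ring
  · show ((kron a 0 : ℤ) : ℂ) = 0
    rw [kron_zero]; norm_num
  · -- automaticity
    haveI : NeZero (4 * a.natAbs) := ⟨by omega⟩
    apply Set.Finite.subset (Set.finite_range
      (fun x : (ℤˣ × ZMod (4 * a.natAbs) × ZMod (4 * a.natAbs)) ⊕ ℤˣ =>
        Sum.elim
          (fun p : ℤˣ × ZMod (4 * a.natAbs) × ZMod (4 * a.natAbs) => fun m : ℕ =>
            (((p.1 : ℤ) * jacobiSym a ((p.2.1 * (m : ZMod (4 * a.natAbs)) + p.2.2).val) : ℤ) : ℂ))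
          (fun c : ℤˣ => fun m : ℕ => (((c : ℤ) * kron a m : ℤ) : ℂ)) x))
    rintro g ⟨k, s, hs, rfl⟩
    rcases eq_or_ne s 0 with rfl | hs0
    · -- s = 0
      obtain ⟨c, hc⟩ : ∃ c : ℤˣ, (c : ℤ) = ZMod.χ₈ (a : ZMod 8) ^ k := by
        rcases hpowcases k with h' | h'
        · exact ⟨1, by rw [h']; rfl⟩
        · exact ⟨-1, by rw [h']; rfl⟩
      refine ⟨Sum.inr c, ?_⟩
      funext m
      show (((c : ℤ) * kron a m : ℤ) : ℂ) = ((kron a (2 ^ k * m + 0) : ℤ) : ℂ)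
      refine congrArg _ ?_
      rw [Nat.add_zero, kron_pow2_mul, hc]
    · -- s ≠ 0
      haveI : Fact (Nat.Prime 2) := ⟨Nat.prime_two⟩
      set j := padicValNat 2 s with hj
      set w := s / 2 ^ j with hw
      have hdvd : 2 ^ j ∣ s := pow_padicValNat_dvd
      have hsw : s = 2 ^ j * w := (Nat.mul_div_cancel' hdvd).symm
      have hwodd : w % 2 = 1 := by
        rcases Nat.even_or_odd w with hev | hod
        · exfalso
          obtain ⟨c, hc⟩ := hev
          have hdd : (2 : ℕ) ^ (j + 1) ∣ 2 ^ j * w := ⟨c, by rw [hc]; ring⟩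
          rw [← hsw] at hdd
          exact pow_succ_padicValNat_not_dvd hs0 hdd
        · exact Nat.odd_iff.mp hod
      have hjk : j < k := by
        by_contra hjk
        push_neg at hjk
        have h1 : (2:ℕ) ^ k ≤ 2 ^ j := Nat.pow_le_pow_right (by norm_num) hjk
        have h2 : 2 ^ j ≤ s := Nat.le_of_dvd (Nat.pos_of_ne_zero hs0) hdvd
        omega
      set r := k - j with hr
      have hkr : k = j + r := by omega
      have hr1 : 1 ≤ r := by omega
      obtain ⟨c, hc⟩ : ∃ c : ℤˣ, (c : ℤ) = ZMod.χ₈ (a : ZMod 8) ^ j := by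
        rcases hpowcases j with h' | h'
        · exact ⟨1, by rw [h']; rfl⟩
        · exact ⟨-1, by rw [h']; rfl⟩
      refine ⟨Sum.inl (c, ((2 ^ r : ℕ) : ZMod (4 * a.natAbs)), (w : ZMod (4 * a.natAbs))), ?_⟩
      funext m
      show (((c : ℤ) * jacobiSym a
          ((((2 ^ r : ℕ) : ZMod (4 * a.natAbs)) * (m : ZMod (4 * a.natAbs))
            + (w : ZMod (4 * a.natAbs))).val) : ℤ) : ℂ)
        = ((kron a (2 ^ k * m + s) : ℤ) : ℂ)
      refine congrArg _ ?_
      have hsplit : 2 ^ k * m + s = 2 ^ j * (2 ^ r * m + w) := by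
        rw [hsw, hkr, pow_add]; ring
      have hodd : (2 ^ r * m + w) % 2 = 1 := by
        have hdd : 2 ∣ 2 ^ r * m := Dvd.dvd.mul_right (dvd_pow_self 2 (by omega)) m
        omega
      have hval : ((((2 ^ r : ℕ) : ZMod (4 * a.natAbs))) * (m : ZMod (4 * a.natAbs))
          + (w : ZMod (4 * a.natAbs))).val = (2 ^ r * m + w) % (4 * a.natAbs) := by
        rw [← Nat.cast_mul, ← Nat.cast_add, ZMod.val_natCast]
      rw [hsplit, kron_pow2_mul, hmodM _ hodd, hval, hc]
  · -- not eventually periodic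
    rintro ⟨N, T, hT, hp⟩
    have hp' : ∀ n, N ≤ n → (kron a (n + T) : ℂ) = (kron a n : ℂ) := fun n hn => hp n hn
    haveI : Fact (Nat.Prime 2) := ⟨Nat.prime_two⟩
    have hT0 : T ≠ 0 := by omega
    set t := padicValNat 2 T with ht
    set T₀ := T / 2 ^ t with hT₀
    have hdvd : 2 ^ t ∣ T := pow_padicValNat_dvd
    have hTeq : T = 2 ^ t * T₀ := (Nat.mul_div_cancel' hdvd).symm
    have hT₀odd : T₀ % 2 = 1 := by
      rcases Nat.even_or_odd T₀ with hev | hod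
      · exfalso
        obtain ⟨c, hc⟩ := hev
        have hdd : (2 : ℕ) ^ (t + 1) ∣ 2 ^ t * T₀ := ⟨c, by rw [hc]; ring⟩
        rw [← hTeq] at hdd
        exact pow_succ_padicValNat_not_dvd hT0 hdd
      · exact Nat.odd_iff.mp hod
    obtain ⟨l, hl⟩ : ∃ l, T₀ = 2 * l + 1 := ⟨T₀ / 2, by omega⟩
    have hpk : ∀ k n, N ≤ n → (kron a (n + k * T) : ℂ) = (kron a n : ℂ) := by
      intro k
      induction k with
      | zero => simp
      | succ k ih =>
          intro n hn
          have hEq : n + (k + 1) * T = n + k * T + T := by ring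
          rw [hEq, hp' _ (le_trans hn (Nat.le_add_right n (k * T))), ih n hn]
    set m := 4 * a.natAbs * N + 1 with hm
    have h2dvd : 2 ∣ 4 * a.natAbs * N := ⟨2 * a.natAbs * N, by ring⟩
    have hmodd : m % 2 = 1 := by omega
    have hmN : N ≤ m := by
      have h5 : N ≤ 4 * a.natAbs * N := Nat.le_mul_of_pos_left N (by omega)
      omega
    have hkm : kron a m = 1 := by
      rw [hmodM m hmodd]
      have hmm : m % (4 * a.natAbs) = 1 := by
        rw [hm, Nat.mul_add_mod]
        exact Nat.mod_eq_of_lt (by omega)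
      rw [hmm, jacobiSym.one_right]
    set n := 2 ^ t * m with hn
    have hnN : N ≤ n := le_trans hmN (Nat.le_mul_of_pos_left m (Nat.pow_pos two_pos))
    have hkn : kron a n = ZMod.χ₈ (a : ZMod 8) ^ t := by
      rw [hn, kron_pow2_mul, hkm, mul_one]
    have hshift : n + 2 * a.natAbs * T = 2 ^ t * (m + 2 * a.natAbs * T₀) := by
      rw [hn, hTeq]; ring
    have h2dvd' : 2 ∣ 2 * a.natAbs * T₀ := ⟨a.natAbs * T₀, by ring⟩
    have hx_odd : (m + 2 * a.natAbs * T₀) % 2 = 1 := by omega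
    have hxmod : (m + 2 * a.natAbs * T₀) % (4 * a.natAbs) = 2 * a.natAbs + 1 := by
      have hxeq : m + 2 * a.natAbs * T₀ = 4 * a.natAbs * (N + l) + (2 * a.natAbs + 1) := by
        rw [hm, hl]; ring
      rw [hxeq, Nat.mul_add_mod]
      exact Nat.mod_eq_of_lt (by omega)
    have hkx : kron a (m + 2 * a.natAbs * T₀) = -1 := by
      rw [hmodM _ hx_odd, hxmod]
      exact jacobi_key h4
    have hcontra : (kron a (n + 2 * a.natAbs * T) : ℂ) = (kron a n : ℂ) :=
      hpk (2 * a.natAbs) n hnN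
    rw [hshift, kron_pow2_mul, hkx, hkn] at hcontra
    have hZ : ZMod.χ₈ (a : ZMod 8) ^ t * (-1) = ZMod.χ₈ (a : ZMod 8) ^ t := by
      exact_mod_cast hcontra
    have h0 : ZMod.χ₈ (a : ZMod 8) ^ t = 0 := by linarith
    exact pow_ne_zero t hene h0
  · -- zeros controlled by d = |a|
    refine ⟨a.natAbs, hA1, ?_⟩
    intro n hn
    have hn0 : n ≠ 0 := by omega
    haveI : Fact (Nat.Prime 2) := ⟨Nat.prime_two⟩
    have hdvd : 2 ^ padicValNat 2 n ∣ n := pow_padicValNat_dvd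
    have hnu : n = 2 ^ padicValNat 2 n * (n / 2 ^ padicValNat 2 n) :=
      (Nat.mul_div_cancel' hdvd).symm
    have hu0 : n / 2 ^ padicValNat 2 n ≠ 0 :=
      (Nat.div_pos (Nat.le_of_dvd (Nat.pos_of_ne_zero hn0) hdvd)
        (Nat.pow_pos two_pos)).ne'
    haveI : NeZero (n / 2 ^ padicValNat 2 n) := ⟨hu0⟩
    have hkron : kron a n = ZMod.χ₈ (a : ZMod 8) ^ padicValNat 2 n
        * jacobiSym a (n / 2 ^ padicValNat 2 n) := by
      unfold kron
      rw [if_neg hn0]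
    have hcop : Nat.Coprime (2 ^ padicValNat 2 n) a.natAbs :=
      Nat.Coprime.pow_left _ ((Nat.prime_two.coprime_iff_not_dvd).mpr (by omega))
    have hgcd : Nat.gcd n a.natAbs = Nat.gcd (n / 2 ^ padicValNat 2 n) a.natAbs := by
      conv_lhs => rw [hnu]
      exact Nat.Coprime.gcd_mul_left_cancel _ hcop
    have hiff : kron a n = 0 ↔ jacobiSym a (n / 2 ^ padicValNat 2 n) = 0 := by
      rw [hkron, mul_eq_zero, or_iff_right (pow_ne_zero _ hene)]
    have hgc : Int.gcd a ((n / 2 ^ padicValNat 2 n : ℕ) : ℤ) = Nat.gcd n a.natAbs := by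
      rw [hgcd, Nat.gcd_comm]
      simp only [Int.gcd, Int.natAbs_natCast]
    show (kron a n : ℂ) = 0 ↔ Nat.gcd n a.natAbs ≠ 1
    rw [Int.cast_eq_zero, hiff, jacobiSym.eq_zero_iff_not_coprime, hgc]
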